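/- Let A be an associative unital F-algebra and suppose given elements f(b,a) ∈ A for every pair a < b in Γ such that f(b,a)·f(a,c) = f(b,c) whenever c < a < b. Define left A-module maps d : A ⊗_F Ĉ_n → A ⊗_F Ĉ_{n−1} for n ≥ 0 by d(m ⊗ [(b_n > ⋯ > b₀); b,q]) = m·f(b,b_n) ⊗ [(b_{n−1} > ⋯ > b₀); b_n, q − d(b,b_n)] − m ⊗ δ̂[(b_n > ⋯ > b₀); b,q]. Then d ∘ d = 0; that is, (A ⊗_F Ĉ_•, d) is a chain complex of free left A-modules. -/

import Mathlib

/-- A finite ranked poset: a partial order with a unique minimal element `star`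
and a rank function `rk` such that `rk star = 0`, covering relations increase the
rank by exactly one, and `rk` is strictly monotone (for a finite poset this is
equivalent to: all maximal chains in `[star, x]` have the same length `rk x`). -/
structure RankedPoset (Γ : Type) [PartialOrder Γ] where
  star : Γ
  rk : Γ → ℕ
  bot_le : ∀ x, star ≤ x
  rk_star : rk star = 0
  rk_covBy : ∀ ⦃x y : Γ⦄, x ⋖ y → rk y = rk x + 1
  rk_strictMono : StrictMono rk

variable {Γ : Type} [PartialOrder Γ]

/-- A basis element `[(b_n > ⋯ > b₀); b, q]` of the `(b,q)`-summand of `Ĉ_{n-1}`: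
here `b ∈ Γ₊`, `1 ≤ q ≤ rk b`, and `b > b_n > ⋯ > b₀` is a strictly decreasing chain
(recorded as the list `l = [b_n, …, b₀]` of length `n`) contained in
`Γ_{b,q} = {a : * < a < b, rk b - rk a ≤ q - 1}`. -/
structure ChainIdx (R : RankedPoset Γ) (n : ℕ) where
  b : Γ
  q : ℕ
  l : List Γ
  hq1 : 1 ≤ q
  hq2 : q ≤ R.rk b
  hlen : l.length = n
  hpair : List.Pairwise (· > ·) (b :: l)
  hmem : ∀ a ∈ l, R.star < a ∧ R.rk b - R.rk a ≤ q - 1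

namespace ChainIdx

variable {R : RankedPoset Γ} {n : ℕ}

theorem l_ne_nil (β : ChainIdx R (n + 1)) : β.l ≠ [] :=
  List.ne_nil_of_length_pos (by rw [β.hlen]; omega)

theorem head_lt (β : ChainIdx R (n + 1)) : β.l.head β.l_ne_nil < β.b :=
  (List.pairwise_cons.mp β.hpair).1 _ (List.head_mem β.l_ne_nil)

/-- `[(b_{n-1} > ⋯ > b₀); b_n, q - d(b,b_n)]`, the index appearing in the leading term of
the differential. -/
def top (β : ChainIdx R (n + 1)) : ChainIdx R n where
  b := β.l.head β.l_ne_nil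
  q := β.q - (R.rk β.b - R.rk (β.l.head β.l_ne_nil))
  l := β.l.tail
  hq1 := by
    have h1 := (β.hmem _ (List.head_mem β.l_ne_nil)).2
    have h2 := β.hq1
    omega
  hq2 := by
    have h1 := R.rk_strictMono β.head_lt
    have h2 := β.hq2
    omega
  hlen := by
    have := β.hlen
    cases h : β.l with
    | nil => exact absurd h β.l_ne_nil
    | cons a t => simp [h] at this ⊢; omega
  hpair := by
    have h := β.hpair.of_cons
    rwa [← List.cons_head_tail β.l_ne_nil] at h
  hmem := by
    intro a ha
    have hal : a ∈ β.l := List.mem_of_mem_tail ha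
    have h1 := (β.hmem a hal).1
    have h2 := (β.hmem a hal).2
    have hpl : List.Pairwise (· > ·) (β.l.head β.l_ne_nil :: β.l.tail) := by
      have h := β.hpair.of_cons
      rwa [← List.cons_head_tail β.l_ne_nil] at h
    have h3 : a < β.l.head β.l_ne_nil := (List.pairwise_cons.mp hpl).1 a ha
    have h4 := R.rk_strictMono h3
    have h5 := R.rk_strictMono β.head_lt
    have h6 := β.hq1
    have h7 := β.hq2
    exact ⟨h1, by omega⟩

/-- The index obtained by deleting the `i`-th entry of the chain (i.e. `b_{n-i}`). -/
def del (β : ChainIdx R (n + 1)) (i : Fin (n + 1)) : ChainIdx R n where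
  b := β.b
  q := β.q
  l := β.l.eraseIdx i
  hq1 := β.hq1
  hq2 := β.hq2
  hlen := by
    have h1 := List.length_eraseIdx_add_one (l := β.l) (i := i) (by rw [β.hlen]; exact i.isLt)
    have h2 := β.hlen
    omega
  hpair := List.Pairwise.sublist ((β.l.eraseIdx_sublist i).cons₂ β.b) β.hpair
  hmem := fun a ha => β.hmem a ((β.l.eraseIdx_sublist i).subset ha)

end ChainIdx

section Differential

variable (R : RankedPoset Γ) (A : Type) [Ring A]

/-- The value of the differential on the basis element `1 ⊗ [(b_n > ⋯ > b₀); b,q]`: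
`f(b,b_n) ⊗ [(b_{n-1} > ⋯ > b₀); b_n, q - d(b,b_n)] - 1 ⊗ δ̂[(b_n > ⋯ > b₀); b,q]`. -/
noncomputable def dBasis (f : Γ → Γ → A) {n : ℕ} (β : ChainIdx R (n + 1)) :
    ChainIdx R n →₀ A :=
  Finsupp.single β.top (f β.b (β.l.head β.l_ne_nil)) -
    ∑ i : Fin (n + 1), Finsupp.single (β.del i) ((-1 : A) ^ (i : ℕ))

/-- The differential `d : A ⊗ Ĉ_n → A ⊗ Ĉ_{n-1}` (the free `A`-module `A ⊗ Ĉ_n` being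
realized as the finitely supported functions `ChainIdx R (n+1) →₀ A`), extended from
`d(m ⊗ [(b_n > ⋯ > b₀); b,q]) = m·f(b,b_n) ⊗ [(b_{n-1} > ⋯ > b₀); b_n, q - d(b,b_n)]
  - m ⊗ δ̂[(b_n > ⋯ > b₀); b,q]`. -/
noncomputable def dMap (f : Γ → Γ → A) (n : ℕ) :
    (ChainIdx R (n + 1) →₀ A) → (ChainIdx R n →₀ A) :=
  fun x => x.sum fun β m => (dBasis R A f β).mapRange (fun a => m * a) (mul_zero m)

end Differential



namespace ChainIdx
variable {R : RankedPoset Γ} {n : ℕ}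

theorem ext' {β γ : ChainIdx R n} (hb : β.b = γ.b) (hq : β.q = γ.q)
    (hl : β.l = γ.l) : β = γ := by
  cases β; cases γ
  subst hb; subst hq; subst hl; rfl

@[simp] theorem del_b (β : ChainIdx R (n + 1)) (i : Fin (n + 1)) : (β.del i).b = β.b := rfl
@[simp] theorem del_q (β : ChainIdx R (n + 1)) (i : Fin (n + 1)) : (β.del i).q = β.q := rfl
@[simp] theorem del_l (β : ChainIdx R (n + 1)) (i : Fin (n + 1)) :
    (β.del i).l = β.l.eraseIdx i := rfl
@[simp] theorem top_b (β : ChainIdx R (n + 1)) : β.top.b = β.l.head β.l_ne_nil := rfl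
@[simp] theorem top_q (β : ChainIdx R (n + 1)) :
    β.top.q = β.q - (R.rk β.b - R.rk (β.l.head β.l_ne_nil)) := rfl
@[simp] theorem top_l (β : ChainIdx R (n + 1)) : β.top.l = β.l.tail := rfl

end ChainIdx

theorem eraseIdx_eraseIdx' {α : Type*} (l : List α) (i j : ℕ) (h : j < i) :
    (l.eraseIdx i).eraseIdx j = (l.eraseIdx j).eraseIdx (i - 1) := by
  induction l generalizing i j with
  | nil => simp
  | cons a t ih =>
    match i, j with
    | i + 1, 0 => simp
    | i + 1, j + 1 =>
      have hj : j < i := by omega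
      obtain ⟨i, rfl⟩ : ∃ i', i = i' + 1 := ⟨i - 1, by omega⟩
      simp only [List.eraseIdx_cons_succ, Nat.add_sub_cancel]
      rw [ih (i + 1) j hj]
      simp

section Key
variable {R : RankedPoset Γ} {A : Type} [Ring A]

theorem del_del {n : ℕ} (β : ChainIdx R (n + 2)) (i i' : Fin (n + 2)) (j j' : Fin (n + 1))
    (h : (j : ℕ) < (i : ℕ)) (h1 : (i' : ℕ) = (j : ℕ)) (h2 : (j' : ℕ) = (i : ℕ) - 1) :
    (β.del i).del j = (β.del i').del j' := by
  refine ChainIdx.ext' rfl rfl ?_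
  show (β.l.eraseIdx i).eraseIdx j = (β.l.eraseIdx i').eraseIdx j'
  rw [h1, h2, eraseIdx_eraseIdx' _ _ _ h]

theorem key2 {n : ℕ} (β : ChainIdx R (n + 2)) :
    ∑ i : Fin (n + 2), ((-1 : A) ^ (i : ℕ)) •
      ∑ j : Fin (n + 1), Finsupp.single ((β.del i).del j) ((-1 : A) ^ (j : ℕ)) = 0 := by
  simp only [Finset.smul_sum, Finsupp.smul_single', ← pow_add]
  rw [← Finset.sum_product']
  refine Finset.sum_involution
    (fun p _ => if h : (p.2 : ℕ) < (p.1 : ℕ)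
      then (⟨(p.2 : ℕ), by omega⟩, ⟨(p.1 : ℕ) - 1, by have := p.1.isLt; omega⟩)
      else (⟨(p.2 : ℕ) + 1, by have := p.2.isLt; omega⟩,
            ⟨(p.1 : ℕ), by have := p.1.isLt; have := p.2.isLt; omega⟩))
    ?_ ?_ (fun p hp => Finset.mem_product.mpr ⟨Finset.mem_univ _, Finset.mem_univ _⟩) ?_
  · intro p hp
    by_cases hlt : (p.2 : ℕ) < (p.1 : ℕ)
    · simp only [dif_pos hlt]
      rw [del_del β p.1 ⟨(p.2 : ℕ), by omega⟩ p.2 ⟨(p.1 : ℕ) - 1, by have := p.1.isLt; omega⟩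
        hlt rfl rfl]
      rw [← Finsupp.single_add]
      have he : (p.1 : ℕ) + (p.2 : ℕ) = ((p.2 : ℕ) + ((p.1 : ℕ) - 1)) + 1 := by omega
      rw [he, pow_succ]
      simp
    · simp only [dif_neg hlt]
      rw [del_del β ⟨(p.2 : ℕ) + 1, by have := p.2.isLt; omega⟩ p.1
        ⟨(p.1 : ℕ), by have := p.1.isLt; have := p.2.isLt; omega⟩ p.2
        (show (p.1 : ℕ) < (p.2 : ℕ) + 1 by omega) rfl rfl]
      rw [← Finsupp.single_add]
      have he : ((p.2 : ℕ) + 1) + (p.1 : ℕ) = ((p.1 : ℕ) + (p.2 : ℕ)) + 1 := by omega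
      rw [he, pow_succ]
      simp
  · intro p hp hne
    by_cases hlt : (p.2 : ℕ) < (p.1 : ℕ)
    · simp only [dif_pos hlt]
      intro he
      have := congrArg (fun x => ((x.1 : Fin (n + 2)) : ℕ)) he
      simp at this; omega
    · simp only [dif_neg hlt]
      intro he
      have := congrArg (fun x => ((x.1 : Fin (n + 2)) : ℕ)) he
      simp at this; omega
  · intro p hp
    by_cases hlt : (p.2 : ℕ) < (p.1 : ℕ)
    · simp only [dif_pos hlt]
      rw [dif_neg (show ¬ ((p.1 : ℕ) - 1 < (p.2 : ℕ)) by omega)]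
      refine Prod.ext (Fin.ext ?_) (Fin.ext ?_) <;> simp <;> omega
    · simp only [dif_neg hlt]
      rw [dif_pos (show (p.1 : ℕ) < (p.2 : ℕ) + 1 by omega)]
      refine Prod.ext (Fin.ext ?_) (Fin.ext ?_) <;> simp <;> omega

end Key

section Key1
variable {R : RankedPoset Γ} {A : Type} [Ring A]

theorem key1 (f : Γ → Γ → A) (hf : ∀ a b c : Γ, c < a → a < b → f b a * f a c = f b c)
    {n : ℕ} (β : ChainIdx R (n + 2)) :
    ∑ i : Fin (n + 2), ((-1 : A) ^ (i : ℕ)) •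
      Finsupp.single ((β.del i).top) (f (β.del i).b ((β.del i).l.head (β.del i).l_ne_nil)) =
    (f β.b (β.l.head β.l_ne_nil)) • dBasis R A f β.top := by
  obtain ⟨a, l1, hl0⟩ := List.exists_cons_of_ne_nil β.l_ne_nil
  have hlen1 : l1.length = n + 1 := by have := β.hlen; rw [hl0] at this; simpa using this
  obtain ⟨c, t, hl1⟩ := List.exists_cons_of_ne_nil
    (show l1 ≠ [] from List.ne_nil_of_length_pos (by omega))
  have hl : β.l = a :: c :: t := by rw [hl0, hl1]
  have hp := β.hpair
  rw [hl] at hp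
  have hab : a < β.b := (List.pairwise_cons.mp hp).1 a (by simp)
  have hca : c < a := (List.pairwise_cons.mp hp.of_cons).1 c (by simp)
  have hrk1 : R.rk c < R.rk a := R.rk_strictMono hca
  have hrk2 : R.rk a < R.rk β.b := R.rk_strictMono hab
  have hhead : β.l.head β.l_ne_nil = a := by simp [hl]
  have hcomm : ∀ (x : A) (k : ℕ), (-1 : A) ^ k * x = x * (-1 : A) ^ k :=
    fun x k => ((Commute.neg_one_left x).pow_left k).eq
  -- index identities
  have E0 : (β.del 0).top = β.top.top := by
    refine ChainIdx.ext' ?_ ?_ ?_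
    · show ((β.l.eraseIdx 0).head _) = (β.top.l.head _)
      simp [hl]
    · show (β.del 0).q - (R.rk (β.del 0).b - R.rk ((β.l.eraseIdx 0).head _)) =
        β.top.q - (R.rk β.top.b - R.rk (β.top.l.head _))
      simp only [ChainIdx.del_b, ChainIdx.del_q, ChainIdx.top_b, ChainIdx.top_q,
        ChainIdx.top_l]
      simp [hl]
      omega
    · show (β.l.eraseIdx 0).tail = β.top.l.tail
      simp [hl]
  have hd0 : (β.del 0).l.head (β.del 0).l_ne_nil = c := by
    simp [ChainIdx.del_l, hl]
  have Esucc : ∀ j : Fin (n + 1), (β.del j.succ).top = β.top.del j := by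
    intro j
    refine ChainIdx.ext' ?_ ?_ ?_ <;>
      simp [ChainIdx.del_b, ChainIdx.del_q, ChainIdx.del_l, ChainIdx.top_b, ChainIdx.top_q,
        ChainIdx.top_l, hl, Fin.val_succ]
  have hdsucc : ∀ j : Fin (n + 1),
      (β.del j.succ).l.head (β.del j.succ).l_ne_nil = a := by
    intro j
    simp [ChainIdx.del_l, hl, Fin.val_succ]
  rw [Fin.sum_univ_succ]
  simp only [Fin.val_zero, pow_zero, one_smul, Fin.val_succ, ChainIdx.del_b]
  have hc1 : f β.top.b (β.top.l.head β.top.l_ne_nil) = f a c := by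
    simp [ChainIdx.top_b, ChainIdx.top_l, hl]
  rw [E0, hd0, hhead, dBasis, hc1]
  simp only [Esucc, hdsucc]
  rw [smul_sub, Finset.smul_sum]
  simp only [Finsupp.smul_single']
  rw [sub_eq_add_neg]
  congr 1
  · rw [hf a β.b c hca hab]
  · rw [← Finset.sum_neg_distrib]
    refine Finset.sum_congr rfl fun j _ => ?_
    rw [← Finsupp.single_neg]
    congr 1
    rw [← hcomm, pow_succ, mul_assoc, neg_one_mul, mul_neg]

end Key1

section Plumb
variable {R : RankedPoset Γ} {A : Type} [Ring A]

noncomputable def dHom (f : Γ → Γ → A) (n : ℕ) :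
    (ChainIdx R (n + 1) →₀ A) →ₗ[A] (ChainIdx R n →₀ A) :=
  Finsupp.lsum ℕ fun β => LinearMap.toSpanSingleton A _ (dBasis R A f β)

theorem dHom_single (f : Γ → Γ → A) {n : ℕ} (γ : ChainIdx R (n + 1)) (m : A) :
    dHom f n (Finsupp.single γ m) = m • dBasis R A f γ := by
  simp [dHom, Finsupp.lsum_single, LinearMap.toSpanSingleton_apply]

theorem dMap_eq (f : Γ → Γ → A) (n : ℕ) :
    dMap R A f n = ⇑(dHom f n) := by
  funext x
  rw [dMap, dHom, Finsupp.lsum_apply]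
  refine Finset.sum_congr rfl fun β _ => ?_
  ext γ
  simp [Finsupp.mapRange_apply, LinearMap.toSpanSingleton_apply, Finsupp.smul_apply,
    smul_eq_mul]

theorem dHom_dBasis (f : Γ → Γ → A)
    (hf : ∀ a b c : Γ, c < a → a < b → f b a * f a c = f b c)
    {n : ℕ} (β : ChainIdx R (n + 2)) :
    dHom f n (dBasis R A f β) = 0 := by
  have expand : dBasis R A f β =
      Finsupp.single β.top (f β.b (β.l.head β.l_ne_nil)) -
        ∑ i : Fin (n + 2), Finsupp.single (β.del i) ((-1 : A) ^ (i : ℕ)) := rfl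
  rw [expand, map_sub, map_sum]
  simp only [dHom_single]
  rw [sub_eq_zero, ← key1 f hf β, eq_comm]
  simp only [dBasis, smul_sub]
  rw [Finset.sum_sub_distrib, key2, sub_zero]

end Plumb


/-- Let `A` be an associative unital `F`-algebra with elements `f(b,a)` for `a < b` in `Γ`
satisfying `f(b,a)·f(a,c) = f(b,c)` for `c < a < b`.  Then the `A`-linear maps
`d : A ⊗ Ĉ_n → A ⊗ Ĉ_{n-1}` satisfy `d ∘ d = 0`; that is, `(A ⊗ Ĉ_•, d)` is a chain
complex of free left `A`-modules. -/
theorem dMap_comp_dMap_eq_zero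
    {Γ : Type} [PartialOrder Γ] [Fintype Γ] (R : RankedPoset Γ)
    (F : Type) [Field F] (A : Type) [Ring A] [Algebra F A]
    (f : Γ → Γ → A)
    (hf : ∀ a b c : Γ, c < a → a < b → f b a * f a c = f b c) :
    (∀ n : ℕ, IsLinearMap A (dMap R A f n)) ∧
      (∀ (n : ℕ) (x : ChainIdx R (n + 2) →₀ A),
        dMap R A f n (dMap R A f (n + 1) x) = 0) := by
  constructor
  · intro n
    rw [dMap_eq]
    exact (dHom f n).isLinear
  · intro n x
    rw [dMap_eq, dMap_eq]
    have hx : (dHom f (n + 1)) x = x.sum fun β m => m • dBasis R A f β := by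
      rw [dHom, Finsupp.lsum_apply]
      exact Finset.sum_congr rfl fun β _ => rfl
    rw [hx, map_finsuppSum]
    refine Finset.sum_eq_zero fun β _ => ?_
    show (dHom f n) (x β • dBasis R A f β) = 0
    rw [map_smul, dHom_dBasis f hf β, smul_zero]
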